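/- For 0 < ‖x‖ < 1 and α ≥ 0, the determinant of the matrix (1+α)(‖x‖^{α-1} Id_n + (α-1)‖x‖^{α-3} x ⊗ x) equals α(1+α)^n ‖x‖^{n(α-1)}. -/

import Mathlib

/-- For `0 < ‖x‖ < 1` and `α ≥ 0`, the determinant of
`(1+α)(‖x‖^(α-1) Id_n + (α-1)‖x‖^(α-3) x ⊗ x)` equals `α(1+α)^n ‖x‖^(n(α-1))`. -/
theorem det_hessian_formula (n : ℕ) (hn : 1 ≤ n) (α : ℝ) (hα : 0 ≤ α)
    (x : EuclideanSpace ℝ (Fin n)) (hx0 : 0 < ‖x‖) (hx1 : ‖x‖ < 1) :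
    (Matrix.of fun i j : Fin n =>
        (1 + α) * (‖x‖ ^ (α - 1) * (if i = j then (1 : ℝ) else 0)
          + (α - 1) * ‖x‖ ^ (α - 3) * (x i * x j))).det
      = α * (1 + α) ^ n * ‖x‖ ^ ((n : ℝ) * (α - 1)) := by
  have hr0 : (0:ℝ) < ‖x‖ := hx0
  set r := ‖x‖ with hrdef
  have hsum : ∑ i, x i * x i = r ^ 2 := by
    have := real_inner_self_eq_norm_sq x
    rw [hrdef, EuclideanSpace.norm_eq, Real.sq_sqrt (Finset.sum_nonneg fun i _ => sq_nonneg _)]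
    refine Finset.sum_congr rfl fun i _ => ?_
    rw [Real.norm_eq_abs, sq_abs, sq]
  have hsplit : r ^ (α - 3) = r ^ (α - 1) * r ^ (-2 : ℝ) := by
    rw [← Real.rpow_add hr0]; ring_nf
  have key : (Matrix.of fun i j : Fin n =>
        (1 + α) * (r ^ (α - 1) * (if i = j then (1 : ℝ) else 0)
          + (α - 1) * r ^ (α - 3) * (x i * x j)))
      = ((1 + α) * r ^ (α - 1)) •
        (1 + Matrix.replicateCol (Fin 1) (fun i => (x i : ℝ)) * Matrix.replicateRow (Fin 1)
          (fun j => (α - 1) * r ^ (-2 : ℝ) * x j)) := by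
    ext i j
    simp only [Matrix.of_apply, Matrix.smul_apply, Matrix.add_apply, Matrix.one_apply,
      Matrix.mul_apply, Matrix.replicateCol_apply, Matrix.replicateRow_apply, Fin.sum_univ_one, smul_eq_mul,
      hsplit]
    ring_nf
  rw [key, Matrix.det_smul]
  erw [Matrix.det_one_add_replicateCol_mul_replicateRow (ι := Fin 1)]
  have hdot : dotProduct (fun j => (α - 1) * r ^ (-2 : ℝ) * x j) (fun i => (x i : ℝ)) = α - 1 := by
    simp only [dotProduct, mul_assoc]
    rw [← Finset.mul_sum, ← Finset.mul_sum, hsum]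
    rw [← Real.rpow_natCast r 2, ← Real.rpow_add hr0]
    norm_num
  rw [hdot]
  have hpow : ((1 + α) * r ^ (α - 1)) ^ n = (1 + α) ^ n * r ^ ((n : ℝ) * (α - 1)) := by
    rw [mul_pow, ← Real.rpow_natCast (r ^ (α - 1)) n, ← Real.rpow_mul hr0.le]
    ring_nf
  rw [Fintype.card_fin, hpow]
  ring
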